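/- For all natural numbers n, m ≥ 1 and k ≥ 0, the Cauchy identity in dimensions holds: C(nm + k − 1, k) = Σ_λ s_λ(1,…,1 [n ones]) · s_λ(1,…,1 [m ones]), where the sum is over partitions λ of k with at most min(n,m) rows. (This expresses (GL_n, GL_m) duality S^k(ℂⁿ⊗ℂᵐ) = ⊕ V(λ)⊗V(λ) at the level of dimensions.) -/

import Mathlib

open Finset

/-- The Young diagram of a partition. -/
def toYoungDiagram {k : ℕ} (p : Nat.Partition k) : YoungDiagram :=
  YoungDiagram.ofRowLens ((p.parts.sort (· ≤ ·)).reverse)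
    (by exact List.sortedGE_iff_pairwise.mpr (List.pairwise_reverse.mpr (p.parts.pairwise_sort (· ≤ ·))))

/-- The number of semistandard Young tableaux of shape `μ` with entries among `n`
values; this is the value `s_μ(1,…,1)` (`n` ones) of the Schur polynomial, i.e.
the dimension of the irreducible polynomial `GL_n`-representation of highest
weight `μ`. -/
noncomputable def ssytCount (μ : YoungDiagram) (n : ℕ) : ℕ :=
  Nat.card {T : SemistandardYoungTableau μ // ∀ i j, (i, j) ∈ μ → T i j < n}

namespace CauchyRSK

/-- `f` is weakly decreasing (rows of a partition). -/
def Anti (f : ℕ → ℕ) : Prop := ∀ r, f (r + 1) ≤ f r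

/-- `λ/μ` is a horizontal strip: `μ ⊆ λ` and `λ_{r+1} ≤ μ_r`. -/
def HS (μ lam : ℕ → ℕ) : Prop := (∀ r, μ r ≤ lam r) ∧ (∀ r, lam (r + 1) ≤ μ r)

theorem HS.anti_left {μ lam : ℕ → ℕ} (h : HS μ lam) : Anti μ :=
  fun r => (h.1 (r + 1)).trans (h.2 r)

theorem HS.anti_right {μ lam : ℕ → ℕ} (h : HS μ lam) : Anti lam :=
  fun r => (h.2 r).trans (h.1 r)

theorem HS.refl {f : ℕ → ℕ} (hf : Anti f) : HS f f := ⟨fun _ => le_rfl, hf⟩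

theorem Anti.le_of_le {f : ℕ → ℕ} (hf : Anti f) : ∀ {i j}, i ≤ j → f j ≤ f i := by
  intro i j h
  induction h with
  | refl => exact le_rfl
  | step _ ih => exact le_trans (hf _) ih

theorem Anti.eventually_zero {f : ℕ → ℕ} (hf : Anti f) {N r : ℕ} (h0 : f N = 0)
    (hr : N ≤ r) : f r = 0 := Nat.le_zero.mp (h0 ▸ hf.le_of_le hr)

/-! ### Local growth rules -/

/-- Forward local rule: bottom-left `ρ`, top-left `μ`, bottom-right `ν`, entry `t` ↦
top-right corner. -/
def locF (ρ μ ν : ℕ → ℕ) (t : ℕ) : ℕ → ℕ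
  | 0 => max (μ 0) (ν 0) + t
  | r + 1 => max (μ (r + 1)) (ν (r + 1)) + (min (μ r) (ν r) - ρ r)

/-- Backward local rule: recover the bottom-left corner from `μ, ν, λ`. -/
def locG (μ ν lam : ℕ → ℕ) : ℕ → ℕ :=
  fun r => max (μ (r + 1)) (ν (r + 1)) + (min (μ r) (ν r) - lam (r + 1))

/-- Backward local rule: recover the entry. -/
def locT (μ ν lam : ℕ → ℕ) : ℕ := lam 0 - max (μ 0) (ν 0)

section LocalRules

variable {ρ μ ν lam : ℕ → ℕ} {t : ℕ}

theorem locF_hs_left (h1 : HS ρ μ) (h2 : HS ρ ν) : HS μ (locF ρ μ ν t) := by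
  constructor
  · intro r
    cases r with
    | zero => simp [locF]; omega
    | succ r => simp [locF]; omega
  · intro r
    have h3 : ρ r ≥ max (μ (r+1)) (ν (r+1)) := by
      have := h1.2 r; have := h2.2 r; omega
    have h4 : ρ r ≤ min (μ r) (ν r) := by
      have := h1.1 r; have := h2.1 r; omega
    simp only [locF]
    have : min (μ r) (ν r) ≤ μ r := min_le_left _ _
    omega

theorem locF_hs_right (h1 : HS ρ μ) (h2 : HS ρ ν) : HS ν (locF ρ μ ν t) :=
  have : locF ρ μ ν t = locF ρ ν μ t := by
    funext r; cases r <;> simp [locF] <;> omega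
  this ▸ locF_hs_left h2 h1

theorem locG_hs_left (h1 : HS μ lam) (h2 : HS ν lam) : HS (locG μ ν lam) μ := by
  have hb : ∀ r, max (μ (r+1)) (ν (r+1)) ≤ lam (r+1) := by
    intro r; have := h1.1 (r+1); have := h2.1 (r+1); omega
  have ht : ∀ r, lam (r+1) ≤ min (μ r) (ν r) := by
    intro r; have := h1.2 r; have := h2.2 r; omega
  constructor
  · intro r
    have := hb r; have := ht r
    simp only [locG]
    have : min (μ r) (ν r) ≤ μ r := min_le_left _ _
    omega
  · intro r
    have := hb r; have := ht r
    simp only [locG]; omega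

theorem locG_hs_right (h1 : HS μ lam) (h2 : HS ν lam) : HS (locG μ ν lam) ν :=
  have : locG μ ν lam = locG ν μ lam := by
    funext r; simp [locG]; omega
  this ▸ locG_hs_left h2 h1

theorem locG_locF (h1 : HS ρ μ) (h2 : HS ρ ν) : locG μ ν (locF ρ μ ν t) = ρ := by
  funext r
  have h3 : ρ r ≥ max (μ (r+1)) (ν (r+1)) := by
    have := h1.2 r; have := h2.2 r; omega
  have h4 : ρ r ≤ min (μ r) (ν r) := by
    have := h1.1 r; have := h2.1 r; omega
  simp only [locG, locF]
  omega

theorem locT_locF (h1 : HS ρ μ) (h2 : HS ρ ν) : locT μ ν (locF ρ μ ν t) = t := by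
  simp [locT, locF]

theorem locF_locG (h1 : HS μ lam) (h2 : HS ν lam) :
    locF (locG μ ν lam) μ ν (locT μ ν lam) = lam := by
  funext r
  cases r with
  | zero =>
    have := h1.1 0; have := h2.1 0
    simp only [locF, locT]; omega
  | succ r =>
    have hb : max (μ (r+1)) (ν (r+1)) ≤ lam (r+1) := by
      have := h1.1 (r+1); have := h2.1 (r+1); omega
    have ht : lam (r+1) ≤ min (μ r) (ν r) := by
      have := h1.2 r; have := h2.2 r; omega
    simp only [locF, locG]
    omega

/-- The size relation for the local rule, in exact (subtraction-free) form. -/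
theorem locF_add_rho (h1 : HS ρ μ) (h2 : HS ρ ν) (r : ℕ) :
    locF ρ μ ν t (r + 1) + ρ r = max (μ (r+1)) (ν (r+1)) + min (μ r) (ν r) := by
  have h3 : ρ r ≥ max (μ (r+1)) (ν (r+1)) := by
    have := h1.2 r; have := h2.2 r; omega
  have h4 : ρ r ≤ min (μ r) (ν r) := by
    have := h1.1 r; have := h2.1 r; omega
  simp only [locF]; omega

end LocalRules

/-- Partial sums: the size of a partition function truncated at `N`. -/
def psum (f : ℕ → ℕ) (N : ℕ) : ℕ := ∑ r ∈ Finset.range N, f r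

theorem psum_congr_of_zero {f : ℕ → ℕ} {N M : ℕ} (h : ∀ r, N ≤ r → f r = 0) (hNM : N ≤ M) :
    psum f M = psum f N := by
  unfold psum
  rw [← Finset.sum_subset (Finset.range_subset_range.mpr hNM)]
  intro x hx hnx
  exact h x (by simpa using hnx)

/-- Aggregated size relation for the local rule. -/
theorem psum_locF (h1 : HS ρ μ) (h2 : HS ρ ν) {t N : ℕ}
    (hμ : ∀ r, N ≤ r → μ r = 0) (hν : ∀ r, N ≤ r → ν r = 0) :
    psum (locF ρ μ ν t) (N + 1) + psum ρ (N + 1) = t + psum μ (N + 1) + psum ν (N + 1) := by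
  have hρ : ∀ r, N ≤ r → ρ r = 0 := by
    intro r hr
    have := h1.1 r
    have := hμ r hr
    omega
  have key : ∀ r, locF ρ μ ν t (r + 1) + ρ r = max (μ (r+1)) (ν (r+1)) + min (μ r) (ν r) :=
    fun r => locF_add_rho h1 h2 r
  have hρN : psum ρ (N + 1) = psum ρ N := psum_congr_of_zero hρ (Nat.le_succ N)
  have e1 : psum (locF ρ μ ν t) (N+1) = locF ρ μ ν t 0 + ∑ r ∈ Finset.range N, locF ρ μ ν t (r+1) := by
    unfold psum; rw [Finset.sum_range_succ']; omega
  have e2 : ∑ r ∈ Finset.range N, locF ρ μ ν t (r+1) + ∑ r ∈ Finset.range N, ρ r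
      = ∑ r ∈ Finset.range N, max (μ (r+1)) (ν (r+1)) + ∑ r ∈ Finset.range N, min (μ r) (ν r) := by
    rw [← Finset.sum_add_distrib, ← Finset.sum_add_distrib]
    exact Finset.sum_congr rfl fun r _ => key r
  have e3 : psum μ (N+1) + psum ν (N+1)
      = (max (μ 0) (ν 0) + ∑ r ∈ Finset.range N, max (μ (r+1)) (ν (r+1)))
        + ∑ r ∈ Finset.range N, min (μ r) (ν r) := by
    have emx : psum μ (N+1) + psum ν (N+1)
        = ∑ r ∈ Finset.range (N+1), max (μ r) (ν r) + ∑ r ∈ Finset.range (N+1), min (μ r) (ν r) := by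
      unfold psum
      rw [← Finset.sum_add_distrib, ← Finset.sum_add_distrib]
      exact Finset.sum_congr rfl fun r _ => by omega
    rw [emx]
    have : ∑ r ∈ Finset.range (N+1), max (μ r) (ν r)
        = max (μ 0) (ν 0) + ∑ r ∈ Finset.range N, max (μ (r+1)) (ν (r+1)) := by
      rw [Finset.sum_range_succ']; omega

    rw [this]
    have : ∑ r ∈ Finset.range (N+1), min (μ r) (ν r) = ∑ r ∈ Finset.range N, min (μ r) (ν r) := by
      rw [Finset.sum_range_succ]
      have := hμ N le_rfl
      have := hν N le_rfl
      omega
    rw [this]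
  have e0 : locF ρ μ ν t 0 = max (μ 0) (ν 0) + t := rfl
  rw [hρN]
  unfold psum at *
  omega


/-! ### Chains of partitions -/

/-- An up-chain of length `n`: a sequence of partitions starting at `∅`, each step a
horizontal strip, constant from index `n` on. -/
structure Chain (n : ℕ) where
  c : ℕ → ℕ → ℕ
  first : c 0 = fun _ => 0
  step : ∀ i, HS (c i) (c (i + 1))
  const : ∀ i, n ≤ i → c i = c n

namespace Chain

@[ext] theorem ext {n : ℕ} {C D : Chain n} (h : C.c = D.c) : C = D := by
  cases C; cases D; congr

theorem anti {n : ℕ} (C : Chain n) (i : ℕ) : Anti (C.c i) := by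
  cases i with
  | zero => intro r; simp [C.first]
  | succ i => exact (C.step i).anti_right

theorem mono {n : ℕ} (C : Chain n) {i j : ℕ} (h : i ≤ j) (r : ℕ) : C.c i r ≤ C.c j r := by
  induction h with
  | refl => exact le_rfl
  | step _ ih => exact ih.trans ((C.step _).1 r)

/-- Row-boundedness: the `i`-th partition of a chain has at most `i` rows. -/
theorem rows_le {n : ℕ} (C : Chain n) (i : ℕ) : ∀ r, i ≤ r → C.c i r = 0 := by
  induction i with
  | zero => intro r _; simp [C.first]
  | succ i ih =>
    intro r hr
    match r, hr with
    | r + 1, hr =>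
      have h1 := (C.step i).2 r
      have h2 := ih r (by omega)
      omega

theorem rows_le_n {n : ℕ} (C : Chain n) (i : ℕ) : ∀ r, n ≤ r → C.c i r = 0 := by
  intro r hr
  rcases le_or_gt i n with h | h
  · exact C.rows_le i r (le_trans h hr)
  · rw [C.const i h.le]; exact C.rows_le n r hr

end Chain

/-- Row data: entries of one row of the matrix, supported on `[1, n]`. -/
def RowData (n : ℕ) : Type := {t : ℕ → ℕ // ∀ i, (i = 0 ∨ n < i) → t i = 0}

/-! ### The forward row pass -/

/-- Top chain produced from bottom chain `B` and row entries `t`. -/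
def fwd (B : ℕ → ℕ → ℕ) (t : ℕ → ℕ) : ℕ → ℕ → ℕ
  | 0 => fun _ => 0
  | i + 1 => locF (B i) (fwd B t i) (B (i + 1)) (t (i + 1))

section RowPass

variable {n : ℕ}

/-- Vertical-edge invariant of the forward pass. -/
theorem fwd_hs (B : Chain n) (t : ℕ → ℕ) : ∀ i, HS (B.c i) (fwd B.c t i) := by
  intro i
  induction i with
  | zero =>
    rw [B.first]
    exact ⟨fun _ => le_rfl, fun _ => le_rfl⟩
  | succ i ih => exact locF_hs_right ih (B.step i)

theorem fwd_step (B : Chain n) (t : ℕ → ℕ) (i : ℕ) :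
    HS (fwd B.c t i) (fwd B.c t (i + 1)) :=
  locF_hs_left (fwd_hs B t i) (B.step i)

theorem locF_self {μ ν : ℕ → ℕ} (h : ∀ r, ν r ≤ μ r) : locF ν μ ν 0 = μ := by
  funext r
  cases r with
  | zero => have := h 0; simp [locF]; omega
  | succ r =>
    have := h r; have := h (r+1)
    simp [locF]; omega

theorem fwd_const (B : Chain n) (t : RowData n) (i : ℕ) (hi : n ≤ i) :
    fwd B.c t.1 i = fwd B.c t.1 n := by
  obtain ⟨j, rfl⟩ : ∃ j, i = n + j := ⟨i - n, by omega⟩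
  clear hi
  induction j with
  | zero => rfl
  | succ j ih =>
    show locF (B.c (n+j)) (fwd B.c t.1 (n+j)) (B.c (n+j+1)) (t.1 (n+j+1)) = fwd B.c t.1 n
    rw [t.2 (n+j+1) (Or.inr (by omega)), B.const (n+j) (by omega), B.const (n+j+1) (by omega), ih]
    apply locF_self
    intro r
    have h1 := (fwd_hs B t.1 (n+j)).1 r
    rwa [B.const (n+j) (by omega), ih] at h1

/-- The forward row pass as a map of chains. -/
def rowFwd (B : Chain n) (t : RowData n) : Chain n where
  c := fwd B.c t.1
  first := rfl
  step := fwd_step B t.1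
  const := fwd_const B t

theorem rowFwd_hs_top (B : Chain n) (t : RowData n) : HS (B.c n) ((rowFwd B t).c n) :=
  fwd_hs B t.1 n

/-! ### The backward row pass -/

/-- `bwdAux T n ρ j` is the bottom-chain entry at index `n - j`. -/
def bwdAux (T : ℕ → ℕ → ℕ) (n : ℕ) (ρ : ℕ → ℕ) : ℕ → (ℕ → ℕ)
  | 0 => ρ
  | j + 1 => locG (T (n - (j + 1))) (bwdAux T n ρ j) (T (n - j))

variable {T : Chain n} {ρ : ℕ → ℕ}

theorem bwdAux_hs (h : HS ρ (T.c n)) : ∀ j, j ≤ n → HS (bwdAux T.c n ρ j) (T.c (n - j)) := by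
  intro j
  induction j with
  | zero => intro _; simpa [bwdAux] using h
  | succ j ih =>
    intro hj
    have hstep : HS (T.c (n - (j+1))) (T.c (n - j)) := by
      have : n - (j+1) + 1 = n - j := by omega
      exact this ▸ T.step (n - (j+1))
    exact locG_hs_left hstep (ih (by omega))

theorem bwdAux_chain_step (h : HS ρ (T.c n)) (j : ℕ) (hj : j + 1 ≤ n) :
    HS (bwdAux T.c n ρ (j + 1)) (bwdAux T.c n ρ j) := by
  have hstep : HS (T.c (n - (j+1))) (T.c (n - j)) := by
    have : n - (j+1) + 1 = n - j := by omega
    exact this ▸ T.step (n - (j+1))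
  exact locG_hs_right hstep (bwdAux_hs h j (by omega))

/-- The backward row pass: the recovered bottom chain. -/
def rowBwd (T : Chain n) (ρ : ℕ → ℕ) (h : HS ρ (T.c n)) : Chain n where
  c := fun i => bwdAux T.c n ρ (n - i)
  first := by
    have h0 := bwdAux_hs h n le_rfl
    rw [Nat.sub_self, T.first] at h0
    funext r
    show bwdAux T.c n ρ (n - 0) r = 0
    have h1 := h0.1 r
    simp only at h1
    simpa using h1
  step := by
    intro i
    show HS (bwdAux T.c n ρ (n - i)) (bwdAux T.c n ρ (n - (i+1)))
    rcases lt_or_ge i n with hi | hi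
    · have e1 : n - i = (n - (i+1)) + 1 := by omega
      rw [e1]
      exact bwdAux_chain_step h (n - (i+1)) (by omega)
    · have e1 : n - i = 0 := by omega
      have e2 : n - (i+1) = 0 := by omega
      rw [e1, e2]
      exact HS.refl h.anti_left
  const := by
    intro i hi
    show bwdAux T.c n ρ (n - i) = bwdAux T.c n ρ (n - n)
    have e1 : n - i = 0 := by omega
    rw [e1, Nat.sub_self]

/-- The recovered row data. -/
def rowBwdT (T : Chain n) (ρ : ℕ → ℕ) (h : HS ρ (T.c n)) : RowData n :=
  ⟨fun i => if 1 ≤ i ∧ i ≤ n then locT (T.c (i-1)) ((rowBwd T ρ h).c i) (T.c i) else 0,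
   fun i hi => by
    have hni : ¬(1 ≤ i ∧ i ≤ n) := by omega
    simp [hni]⟩

/-! ### Round trips -/

theorem bwdAux_fwd (B : Chain n) (t : RowData n) :
    ∀ j, j ≤ n → bwdAux (fwd B.c t.1) n (B.c n) j = B.c (n - j) := by
  intro j
  induction j with
  | zero =>
    intro _
    show bwdAux (fwd B.c t.1) n (B.c n) 0 = B.c (n - 0)
    rw [Nat.sub_zero]
    rfl
  | succ j ih =>
    intro hj
    have e1 : n - j = (n - (j+1)) + 1 := by omega
    show locG (fwd B.c t.1 (n - (j+1))) (bwdAux (fwd B.c t.1) n (B.c n) j) (fwd B.c t.1 (n - j))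
        = B.c (n - (j+1))
    rw [ih (by omega), e1]
    show locG (fwd B.c t.1 (n - (j+1))) (B.c ((n - (j+1)) + 1))
        (locF (B.c (n - (j+1))) (fwd B.c t.1 (n - (j+1))) (B.c ((n - (j+1)) + 1)) (t.1 ((n-(j+1))+1)))
        = B.c (n - (j+1))
    exact locG_locF (fwd_hs B t.1 _) (B.step _)

theorem rowBwd_rowFwd (B : Chain n) (t : RowData n) :
    rowBwd (rowFwd B t) (B.c n) (rowFwd_hs_top B t) = B := by
  ext1
  funext i
  show bwdAux (fwd B.c t.1) n (B.c n) (n - i) = B.c i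
  rcases le_or_gt i n with hi | hi
  · have e : n - (n - i) = i := by omega
    rw [bwdAux_fwd B t (n - i) (by omega), e]
  · rw [show n - i = 0 from by omega]
    show B.c n = B.c i
    rw [B.const i hi.le]

theorem rowBwdT_rowFwd (B : Chain n) (t : RowData n) :
    rowBwdT (rowFwd B t) (B.c n) (rowFwd_hs_top B t) = t := by
  apply Subtype.ext
  funext i
  show (if 1 ≤ i ∧ i ≤ n then _ else 0) = t.1 i
  rcases Decidable.em (1 ≤ i ∧ i ≤ n) with hi | hi
  · rw [if_pos hi]
    obtain ⟨i, rfl⟩ : ∃ j, i = j + 1 := ⟨i - 1, by omega⟩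
    have hB : (rowBwd (rowFwd B t) (B.c n) (rowFwd_hs_top B t)).c (i+1) = B.c (i+1) := by
      rw [rowBwd_rowFwd]
    rw [hB]
    show locT (fwd B.c t.1 ((i+1)-1)) (B.c (i+1)) (fwd B.c t.1 (i+1)) = t.1 (i+1)
    simp only [Nat.add_sub_cancel]
    show locT (fwd B.c t.1 i) (B.c (i+1))
        (locF (B.c i) (fwd B.c t.1 i) (B.c (i+1)) (t.1 (i+1))) = t.1 (i+1)
    exact locT_locF (fwd_hs B t.1 i) (B.step i)
  · rw [if_neg hi, t.2 i (by omega)]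

theorem fwd_rowBwd (h : HS ρ (T.c n)) :
    ∀ i, i ≤ n → fwd (rowBwd T ρ h).c (rowBwdT T ρ h).1 i = T.c i := by
  intro i
  induction i with
  | zero => intro _; rw [T.first]; rfl
  | succ i ih =>
    intro hi
    show locF ((rowBwd T ρ h).c i) (fwd (rowBwd T ρ h).c (rowBwdT T ρ h).1 i)
        ((rowBwd T ρ h).c (i+1)) ((rowBwdT T ρ h).1 (i+1)) = T.c (i+1)
    rw [ih (by omega)]
    have hBi : (rowBwd T ρ h).c i
        = locG (T.c i) ((rowBwd T ρ h).c (i+1)) (T.c (i+1)) := by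
      show bwdAux T.c n ρ (n - i) = locG (T.c i) (bwdAux T.c n ρ (n - (i+1))) (T.c (i+1))
      have e1 : n - i = (n - (i+1)) + 1 := by omega
      rw [e1]
      show locG (T.c (n - ((n - (i+1)) + 1))) (bwdAux T.c n ρ (n - (i+1))) (T.c (n - (n - (i+1))))
          = locG (T.c i) (bwdAux T.c n ρ (n - (i+1))) (T.c (i+1))
      rw [show n - ((n - (i+1)) + 1) = i from by omega, show n - (n - (i+1)) = i + 1 from by omega]
    have ht : (rowBwdT T ρ h).1 (i+1) = locT (T.c i) ((rowBwd T ρ h).c (i+1)) (T.c (i+1)) := by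
      show (if 1 ≤ i+1 ∧ i+1 ≤ n then locT (T.c ((i+1)-1)) ((rowBwd T ρ h).c (i+1)) (T.c (i+1)) else 0) = _
      rw [if_pos ⟨by omega, hi⟩]
      simp
    rw [hBi, ht]
    have hν : HS ((rowBwd T ρ h).c (i+1)) (T.c (i+1)) := by
      show HS (bwdAux T.c n ρ (n - (i+1))) (T.c (i+1))
      have := bwdAux_hs h (n - (i+1)) (by omega)
      rwa [show n - (n - (i+1)) = i + 1 from by omega] at this
    exact locF_locG (T.step i) hν

theorem rowFwd_rowBwd (h : HS ρ (T.c n)) :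
    rowFwd (rowBwd T ρ h) (rowBwdT T ρ h) = T := by
  ext1
  funext i
  rcases le_or_gt i n with hi | hi
  · exact fwd_rowBwd h i hi
  · show (rowFwd (rowBwd T ρ h) (rowBwdT T ρ h)).c i = T.c i
    rw [(rowFwd (rowBwd T ρ h) (rowBwdT T ρ h)).const i hi.le, T.const i hi.le]
    exact fwd_rowBwd h n le_rfl

theorem rowBwd_top (h : HS ρ (T.c n)) : (rowBwd T ρ h).c n = ρ := by
  show bwdAux T.c n ρ (n - n) = ρ
  rw [Nat.sub_self]
  rfl

/-- The row-pass equivalence (one row of the Fomin growth diagram). -/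
def rowEquiv (n : ℕ) : Chain n × RowData n ≃ {p : Chain n × (ℕ → ℕ) // HS p.2 (p.1.c n)} where
  toFun x := ⟨(rowFwd x.1 x.2, x.1.c n), rowFwd_hs_top x.1 x.2⟩
  invFun y := (rowBwd y.1.1 y.1.2 y.2, rowBwdT y.1.1 y.1.2 y.2)
  left_inv x := by
    obtain ⟨B, t⟩ := x
    simp only
    rw [rowBwd_rowFwd, rowBwdT_rowFwd]
  right_inv y := by
    obtain ⟨⟨T, ρ⟩, hy⟩ := y
    simp only [Subtype.mk.injEq, Prod.mk.injEq]
    exact ⟨rowFwd_rowBwd hy, rowBwd_top hy⟩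

/-! ### Size of the row pass -/

theorem psum_rowFwd (B : Chain n) (t : RowData n) :
    psum ((rowFwd B t).c n) n = psum (B.c n) n + ∑ i ∈ Finset.range (n+1), t.1 i := by
  have key : ∀ i, i ≤ n → psum (fwd B.c t.1 i) (n+1)
      = psum (B.c i) (n+1) + ∑ j ∈ Finset.range (i+1), t.1 j := by
    intro i
    induction i with
    | zero =>
      intro _
      have : psum (fun _ => 0 : ℕ → ℕ) (n+1) = 0 := by simp [psum]
      rw [show fwd B.c t.1 0 = (fun _ => 0) from rfl, this, B.first]
      simp [psum, t.2 0 (Or.inl rfl)]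
    | succ i ih =>
      intro hi
      have hloc := psum_locF (t := t.1 (i+1)) (N := n) (fwd_hs B t.1 i) (B.step i)
        (fun r hr => (rowFwd B t).rows_le_n i r hr) (fun r hr => B.rows_le_n (i+1) r hr)
      have := ih (by omega)
      rw [Finset.sum_range_succ]
      show psum (locF (B.c i) (fwd B.c t.1 i) (B.c (i+1)) (t.1 (i+1))) (n+1) = _
      omega
  have h1 := key n le_rfl
  have e1 : psum (fwd B.c t.1 n) (n+1) = psum (fwd B.c t.1 n) n :=
    psum_congr_of_zero (fun r hr => (rowFwd B t).rows_le_n n r hr) (Nat.le_succ n)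
  have e2 : psum (B.c n) (n+1) = psum (B.c n) n :=
    psum_congr_of_zero (fun r hr => B.rows_le_n n r hr) (Nat.le_succ n)
  show psum (fwd B.c t.1 n) n = _
  omega

end RowPass

/-! ### The grid: matrices ≃ pairs of chains -/

/-- The all-empty chain. -/
def Chain.bot (n : ℕ) : Chain n where
  c := fun _ _ => 0
  first := rfl
  step := fun _ => ⟨fun _ => le_rfl, fun _ => le_rfl⟩
  const := fun _ _ => rfl

theorem Chain.top_eq_zero_iff {n : ℕ} (C : Chain n) (h : C.c n = fun _ => 0) :
    ∀ i, C.c i = fun _ => 0 := by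
  intro i
  funext r
  rcases le_or_gt i n with hi | hi
  · have h1 := C.mono hi r
    rw [h] at h1
    simpa using h1
  · rw [C.const i hi.le, h]

theorem Chain.eq_bot {n : ℕ} (C : Chain n) (h : C.c n = fun _ => 0) : C = Chain.bot n := by
  ext1
  funext i
  exact C.top_eq_zero_iff h i

/-- Appending one partition to a chain. -/
def chainSnoc {m : ℕ} (Q : Chain m) (lam : ℕ → ℕ) (h : HS (Q.c m) lam) : Chain (m + 1) where
  c := fun i => if i ≤ m then Q.c i else lam
  first := by simp [Q.first]
  step := by
    intro i
    rcases lt_or_ge i m with hi | hi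
    · simp only [if_pos hi.le, if_pos (by omega : i + 1 ≤ m)]
      exact Q.step i
    · rcases eq_or_lt_of_le hi with rfl | hi'
      · simpa using h
      · simp only [if_neg (by omega : ¬ i ≤ m), if_neg (by omega : ¬ i + 1 ≤ m)]
        exact HS.refl h.anti_right
  const := by
    intro i hi
    simp [if_neg (by omega : ¬ i ≤ m), if_neg (by omega : ¬ m + 1 ≤ m)]

@[simp] theorem chainSnoc_top {m : ℕ} (Q : Chain m) (lam : ℕ → ℕ) (h : HS (Q.c m) lam) :
    (chainSnoc Q lam h).c (m + 1) = lam := by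
  simp [chainSnoc]

theorem chainSnoc_of_le {m : ℕ} (Q : Chain m) (lam : ℕ → ℕ) (h : HS (Q.c m) lam)
    {i : ℕ} (hi : i ≤ m) : (chainSnoc Q lam h).c i = Q.c i := by
  simp [chainSnoc, hi]

/-- Restricting a chain to a shorter length. -/
def chainRestrict {m : ℕ} (Q : Chain (m + 1)) : Chain m where
  c := fun i => Q.c (min i m)
  first := by simp [Q.first]
  step := by
    intro i
    show HS (Q.c (min i m)) (Q.c (min (i+1) m))
    rcases lt_or_ge i m with hi | hi
    · rw [min_eq_left hi.le, min_eq_left (by omega : i + 1 ≤ m)]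
      exact Q.step i
    · rw [min_eq_right hi, min_eq_right (by omega : m ≤ i + 1)]
      exact HS.refl (Q.anti m)
  const := fun i hi => by
    show Q.c (min i m) = Q.c (min m m)
    rw [min_eq_right hi, min_self]

/-- Pairs of chains with common top. -/
def PairType (n m : ℕ) : Type := {p : Chain n × Chain m // p.2.c m = p.1.c n}

instance PairTypeUnique (n : ℕ) : Unique (PairType n 0) where
  default := ⟨(Chain.bot n, Chain.bot 0), rfl⟩
  uniq := by
    rintro ⟨⟨C, Q⟩, hp⟩
    have hQ : Q = Chain.bot 0 := Chain.eq_bot Q (by rw [← Q.const 0 le_rfl, Q.first])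
    have hC : C = Chain.bot n := by
      apply Chain.eq_bot
      rw [← hp, ← Q.const 0 le_rfl, Q.first]
    simp only [PairType]
    rw [Subtype.ext_iff]
    simp [hC, hQ]

theorem rowBwd_congr {n : ℕ} (T : Chain n) {ρ ρ' : ℕ → ℕ} (e : ρ = ρ') (h : HS ρ (T.c n)) :
    rowBwd T ρ h = rowBwd T ρ' (e ▸ h) := by subst e; rfl

theorem rowBwdT_congr {n : ℕ} (T : Chain n) {ρ ρ' : ℕ → ℕ} (e : ρ = ρ') (h : HS ρ (T.c n)) :
    rowBwdT T ρ h = rowBwdT T ρ' (e ▸ h) := by subst e; rfl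

/-- One growth-diagram row, as a step equivalence. -/
def stepEquiv {n m : ℕ} : RowData n × PairType n m ≃ PairType n (m + 1) where
  toFun x :=
    ⟨(rowFwd x.2.1.1 x.1,
      chainSnoc x.2.1.2 ((rowFwd x.2.1.1 x.1).c n)
        (x.2.2 ▸ rowFwd_hs_top x.2.1.1 x.1)),
     by rw [chainSnoc_top]⟩
  invFun y :=
    have hhs : HS (y.1.2.c m) (y.1.1.c n) := y.2 ▸ y.1.2.step m
    (rowBwdT y.1.1 (y.1.2.c m) hhs,
     ⟨(rowBwd y.1.1 (y.1.2.c m) hhs, chainRestrict y.1.2),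
      by
        rw [rowBwd_top]
        show y.1.2.c (min m m) = y.1.2.c m
        rw [min_self]⟩)
  left_inv := by
    rintro ⟨t, ⟨⟨C, Q⟩, hp⟩⟩
    have hρ : (chainSnoc Q ((rowFwd C t).c n) (hp ▸ rowFwd_hs_top C t)).c m = C.c n := by
      rw [chainSnoc_of_le _ _ _ le_rfl, hp]
    have h1 : ∀ h, rowBwdT (rowFwd C t) ((chainSnoc Q ((rowFwd C t).c n)
        (hp ▸ rowFwd_hs_top C t)).c m) h = t := by
      intro h
      rw [rowBwdT_congr _ hρ]
      exact rowBwdT_rowFwd C t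
    have h2 : ∀ h, rowBwd (rowFwd C t) ((chainSnoc Q ((rowFwd C t).c n)
        (hp ▸ rowFwd_hs_top C t)).c m) h = C := by
      intro h
      rw [rowBwd_congr _ hρ]
      exact rowBwd_rowFwd C t
    have h3 : chainRestrict (chainSnoc Q ((rowFwd C t).c n) (hp ▸ rowFwd_hs_top C t)) = Q := by
      apply Chain.ext
      funext i
      show (chainSnoc Q ((rowFwd C t).c n) (hp ▸ rowFwd_hs_top C t)).c (min i m) = Q.c i
      rcases le_or_gt i m with hi | hi
      · rw [min_eq_left hi, chainSnoc_of_le _ _ _ hi]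
      · rw [min_eq_right hi.le, chainSnoc_of_le _ _ _ le_rfl, Q.const i hi.le]
    dsimp only
    refine Prod.ext ?_ (Subtype.ext (Prod.ext ?_ h3))
    · apply h1
      all_goals rw [hρ]; exact rowFwd_hs_top C t
    · apply h2
      all_goals rw [hρ]; exact rowFwd_hs_top C t
  right_inv := by
    rintro ⟨⟨C', Q'⟩, hp⟩
    have hhs : HS (Q'.c m) (C'.c n) := hp ▸ Q'.step m
    dsimp only
    refine Subtype.ext (Prod.ext ?_ ?_)
    · exact rowFwd_rowBwd hhs
    · apply Chain.ext
      funext i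
      rcases le_or_gt i m with hi | hi
      · rw [chainSnoc_of_le _ _ _ hi]
        show Q'.c (min i m) = Q'.c i
        rw [min_eq_left hi]
      · have hh : HS ((chainRestrict Q').c m)
            ((rowFwd (rowBwd C' (Q'.c m) hhs) (rowBwdT C' (Q'.c m) hhs)).c n) := by
          show HS (Q'.c (min m m)) _
          rw [min_self, rowFwd_rowBwd hhs]
          exact hhs
        have e1 : (chainSnoc (chainRestrict Q')
            ((rowFwd (rowBwd C' (Q'.c m) hhs) (rowBwdT C' (Q'.c m) hhs)).c n) hh).c i
            = (rowFwd (rowBwd C' (Q'.c m) hhs) (rowBwdT C' (Q'.c m) hhs)).c n := by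
          show (if i ≤ m then _ else _) = _
          rw [if_neg (by omega : ¬ i ≤ m)]
        rw [e1, rowFwd_rowBwd hhs, ← hp, Q'.const i hi]

/-- The grid (Fomin growth diagram) equivalence: matrices, given as lists of rows,
correspond to pairs of chains with common top. -/
def gridEquiv (n : ℕ) : (m : ℕ) → (Fin m → RowData n) ≃ PairType n m
  | 0 => Equiv.ofUnique _ _
  | m + 1 =>
    ((Fin.insertNthEquiv (fun _ => RowData n) (Fin.last m)).symm.trans
      ((Equiv.refl (RowData n)).prodCongr (gridEquiv n m))).trans stepEquiv

/-- The total size of a row. -/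
def rowSum {n : ℕ} (t : RowData n) : ℕ := ∑ i ∈ Finset.range (n + 1), t.1 i

theorem psum_gridEquiv (n : ℕ) : ∀ (m : ℕ) (M : Fin m → RowData n),
    psum (((gridEquiv n m) M).1.1.c n) n = ∑ j, rowSum (M j)
  | 0, M => by
    have : ((gridEquiv n 0) M).1.1 = Chain.bot n := by
      have := Subtype.ext_iff.mp ((PairTypeUnique n).uniq ((gridEquiv n 0) M))
      exact congrArg Prod.fst this
    rw [this]
    simp [psum, Chain.bot]
  | m + 1, M => by
    have ih := psum_gridEquiv n m (fun i => M ((Fin.last m).succAbove i))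
    have hgrid : (gridEquiv n (m+1)) M
        = stepEquiv (M (Fin.last m), (gridEquiv n m) (fun i => M ((Fin.last m).succAbove i))) := rfl
    rw [hgrid]
    have hstep : ∀ (t : RowData n) (p : PairType n m),
        psum ((stepEquiv (t, p)).1.1.c n) n = psum (p.1.1.c n) n + rowSum t := by
      intro t p
      exact psum_rowFwd p.1.1 t
    rw [hstep, ih, Fin.sum_univ_succAbove (fun j => rowSum (M j)) (Fin.last m)]
    omega

/-! ### Semistandard Young tableaux and chains -/

theorem nat_eq_of_lt_iff {a b : ℕ} (h : ∀ j, j < a ↔ j < b) : a = b :=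
  le_antisymm (le_of_forall_lt fun c hc => (h c).mp hc)
    (le_of_forall_lt fun c hc => (h c).mpr hc)

section SSYT

variable {μ : YoungDiagram} {n : ℕ}

/-- The cells of `μ` whose entry is `< i`, as a Young diagram. -/
def subDiag (T : SemistandardYoungTableau μ) (i : ℕ) : YoungDiagram where
  cells := μ.cells.filter (fun p => T p.1 p.2 < i)
  isLowerSet := by
    rintro ⟨r2, j2⟩ ⟨r1, j1⟩ hle hmem
    simp only [Finset.coe_filter, Set.mem_setOf_eq, Finset.mem_coe, YoungDiagram.mem_cells] at *
    obtain ⟨h1, h2⟩ := hle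
    refine ⟨μ.up_left_mem h1 h2 hmem.1, lt_of_le_of_lt ?_ hmem.2⟩
    calc T r1 j1 ≤ T r1 j2 := T.row_weak_of_le h2 (μ.up_left_mem h1 le_rfl hmem.1)
    _ ≤ T r2 j2 := T.col_weak h1 hmem.1

theorem mem_subDiag (T : SemistandardYoungTableau μ) (i : ℕ) {r j : ℕ} :
    (r, j) ∈ subDiag T i ↔ (r, j) ∈ μ ∧ T r j < i := by
  change (r, j) ∈ μ.cells.filter (fun p => T p.1 p.2 < i) ↔ _
  rw [Finset.mem_filter, YoungDiagram.mem_cells]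

theorem lt_subDiag_rowLen (T : SemistandardYoungTableau μ) (i r j : ℕ) :
    j < (subDiag T i).rowLen r ↔ (r, j) ∈ μ ∧ T r j < i := by
  rw [← YoungDiagram.mem_iff_lt_rowLen, mem_subDiag]

/-- The chain of a bounded SSYT. -/
def toChain (T : SemistandardYoungTableau μ) (hT : ∀ i j, (i, j) ∈ μ → T i j < n) :
    Chain n where
  c := fun i r => (subDiag T i).rowLen r
  first := by
    funext r
    apply nat_eq_of_lt_iff
    intro j
    rw [lt_subDiag_rowLen]
    simp
  step := by
    intro i
    constructor
    · intro r
      apply le_of_forall_lt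
      intro j hj
      rw [lt_subDiag_rowLen] at *
      exact ⟨hj.1, by omega⟩
    · intro r
      apply le_of_forall_lt
      intro j hj
      rw [lt_subDiag_rowLen] at *
      obtain ⟨hmem, hlt⟩ := hj
      have hmem' : (r, j) ∈ μ := μ.up_left_mem (by omega) le_rfl hmem
      exact ⟨hmem', by have := T.col_strict (by omega : r < r + 1) hmem; omega⟩
  const := by
    intro i hi
    funext r
    apply nat_eq_of_lt_iff
    intro j
    rw [lt_subDiag_rowLen, lt_subDiag_rowLen]
    constructor
    · rintro ⟨h1, _⟩; exact ⟨h1, hT r j h1⟩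
    · rintro ⟨h1, _⟩; exact ⟨h1, lt_of_lt_of_le (hT r j h1) hi⟩

theorem toChain_top (T : SemistandardYoungTableau μ) (hT : ∀ i j, (i, j) ∈ μ → T i j < n) :
    (toChain T hT).c n = μ.rowLen := by
  funext r
  apply nat_eq_of_lt_iff
  intro j
  rw [show (toChain T hT).c n r = (subDiag T n).rowLen r from rfl, lt_subDiag_rowLen,
    ← YoungDiagram.mem_iff_lt_rowLen]
  exact ⟨fun h => h.1, fun h => ⟨h, hT r j h⟩⟩

theorem chain_ex (C : Chain n) (hC : C.c n = μ.rowLen) {r j : ℕ} (hm : (r, j) ∈ μ) :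
    ∃ i, j < C.c (i + 1) r := by
  refine ⟨n, ?_⟩
  rw [C.const (n+1) (by omega), hC, ← YoungDiagram.mem_iff_lt_rowLen]
  exact hm

/-- The entry function of the SSYT of a chain. -/
def ofChainEntry (C : Chain n) (hC : C.c n = μ.rowLen) (r j : ℕ) : ℕ :=
  if h : (r, j) ∈ μ then Nat.find (chain_ex C hC h) else 0

theorem ofChainEntry_spec1 (C : Chain n) (hC : C.c n = μ.rowLen) {r j : ℕ} (hm : (r, j) ∈ μ) :
    j < C.c (ofChainEntry C hC r j + 1) r := by
  rw [ofChainEntry, dif_pos hm]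
  exact Nat.find_spec (chain_ex C hC hm)

theorem ofChainEntry_le (C : Chain n) (hC : C.c n = μ.rowLen) {r j : ℕ} (hm : (r, j) ∈ μ)
    {e : ℕ} (he : j < C.c (e + 1) r) : ofChainEntry C hC r j ≤ e := by
  rw [ofChainEntry, dif_pos hm]
  exact Nat.find_le he

theorem ofChainEntry_spec2 (C : Chain n) (hC : C.c n = μ.rowLen) {r j : ℕ} (hm : (r, j) ∈ μ) :
    C.c (ofChainEntry C hC r j) r ≤ j := by
  by_cases h0 : ofChainEntry C hC r j = 0
  · rw [h0, C.first]; exact Nat.zero_le j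
  · rw [ofChainEntry, dif_pos hm] at h0 ⊢
    have := Nat.find_min (chain_ex C hC hm) (m := Nat.find (chain_ex C hC hm) - 1) (by omega)
    rw [show Nat.find (chain_ex C hC hm) - 1 + 1 = Nat.find (chain_ex C hC hm) from by omega] at this
    omega

theorem ofChainEntry_lt_n (C : Chain n) (hC : C.c n = μ.rowLen) {r j : ℕ} (hm : (r, j) ∈ μ) :
    ofChainEntry C hC r j < n := by
  have h2 := ofChainEntry_spec2 C hC hm
  by_contra hge
  push_neg at hge
  have : C.c (ofChainEntry C hC r j) r = μ.rowLen r := by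
    rw [C.const _ hge, hC]
  rw [this] at h2
  have : j < μ.rowLen r := (YoungDiagram.mem_iff_lt_rowLen).mp hm
  omega

theorem ofChainEntry_col_strict (C : Chain n) (hC : C.c n = μ.rowLen) {r j : ℕ}
    (hm : (r + 1, j) ∈ μ) :
    ofChainEntry C hC r j < ofChainEntry C hC (r + 1) j := by
  have hm' : (r, j) ∈ μ := μ.up_left_mem (by omega) le_rfl hm
  set e2 := ofChainEntry C hC (r+1) j with he2
  have h1 : j < C.c (e2 + 1) (r + 1) := ofChainEntry_spec1 C hC hm
  have h2 : j < C.c e2 r := lt_of_lt_of_le h1 ((C.step e2).2 r)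
  have he2pos : e2 ≠ 0 := by
    intro h0
    rw [h0, C.first] at h2
    simp at h2
  have h3 : j < C.c ((e2 - 1) + 1) r := by
    have e : e2 - 1 + 1 = e2 := by omega
    rw [e]
    exact h2
  have := ofChainEntry_le C hC hm' h3
  omega

/-- The SSYT of a chain with top `μ`. -/
def ofChain (C : Chain n) (hC : C.c n = μ.rowLen) : SemistandardYoungTableau μ where
  entry := ofChainEntry C hC
  row_weak' := by
    intro r j1 j2 hj hm2
    have hm1 : (r, j1) ∈ μ := μ.up_left_mem le_rfl hj.le hm2
    have := ofChainEntry_spec1 C hC hm2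
    exact ofChainEntry_le C hC hm1 (by omega)
  col_strict' := by
    intro r1 r2 j hr hm2
    obtain ⟨d, rfl⟩ : ∃ d, r2 = r1 + d + 1 := ⟨r2 - r1 - 1, by omega⟩
    clear hr
    induction d with
    | zero => exact ofChainEntry_col_strict C hC hm2
    | succ d ih =>
      have hm' : (r1 + d + 1, j) ∈ μ := μ.up_left_mem (by omega) le_rfl hm2
      have h1 := ih hm'
      have h2 : ofChainEntry C hC (r1 + d + 1) j < ofChainEntry C hC (r1 + d + 1 + 1) j :=
        ofChainEntry_col_strict C hC hm2
      exact lt_trans h1 h2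
  zeros' := by
    intro r j h
    rw [ofChainEntry, dif_neg h]

theorem ofChain_lt_n (C : Chain n) (hC : C.c n = μ.rowLen) :
    ∀ i j, (i, j) ∈ μ → ofChain C hC i j < n := fun _ _ hm => ofChainEntry_lt_n C hC hm

theorem ofChain_toChain (T : SemistandardYoungTableau μ)
    (hT : ∀ i j, (i, j) ∈ μ → T i j < n) :
    ofChain (toChain T hT) (toChain_top T hT) = T := by
  ext r j
  show ofChainEntry (toChain T hT) (toChain_top T hT) r j = T r j
  by_cases hm : (r, j) ∈ μ
  · have h1 : j < (toChain T hT).c (T r j + 1) r := by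
      rw [show (toChain T hT).c (T r j + 1) r = (subDiag T (T r j + 1)).rowLen r from rfl,
        lt_subDiag_rowLen]
      exact ⟨hm, by omega⟩
    have h2 := ofChainEntry_le (toChain T hT) (toChain_top T hT) hm h1
    have h6 := ofChainEntry_spec1 (toChain T hT) (toChain_top T hT) hm
    rw [show (toChain T hT).c (ofChainEntry (toChain T hT) (toChain_top T hT) r j + 1) r
        = (subDiag T (ofChainEntry (toChain T hT) (toChain_top T hT) r j + 1)).rowLen r from rfl,
      lt_subDiag_rowLen] at h6
    omega
  · rw [T.zeros hm]
    show ofChainEntry _ _ r j = 0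
    rw [ofChainEntry, dif_neg hm]

theorem toChain_ofChain (C : Chain n) (hC : C.c n = μ.rowLen) :
    toChain (ofChain C hC) (ofChain_lt_n C hC) = C := by
  apply Chain.ext
  funext i r
  apply nat_eq_of_lt_iff
  intro j
  rw [show (toChain (ofChain C hC) (ofChain_lt_n C hC)).c i r
      = (subDiag (ofChain C hC) i).rowLen r from rfl, lt_subDiag_rowLen]
  constructor
  · rintro ⟨hm, hlt⟩
    have h1 := ofChainEntry_spec1 C hC hm
    have : ofChain C hC r j = ofChainEntry C hC r j := rfl
    rw [this] at hlt
    calc j < C.c (ofChainEntry C hC r j + 1) r := h1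
    _ ≤ C.c i r := C.mono (by omega) r
  · intro hj
    have hm : (r, j) ∈ μ := by
      rw [YoungDiagram.mem_iff_lt_rowLen, ← hC]
      rcases le_or_gt i n with hi | hi
      · exact lt_of_lt_of_le hj (C.mono hi r)
      · rwa [← C.const i hi.le]
    refine ⟨hm, ?_⟩
    have h2 := ofChainEntry_spec2 C hC hm
    show ofChainEntry C hC r j < i
    by_contra hge
    push_neg at hge
    have := C.mono hge r
    omega

/-- The SSYT/chain equivalence. -/
def ssytChainEquiv (μ : YoungDiagram) (n : ℕ) :
    {T : SemistandardYoungTableau μ // ∀ i j, (i, j) ∈ μ → T i j < n}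
      ≃ {C : Chain n // C.c n = μ.rowLen} where
  toFun T := ⟨toChain T.1 T.2, toChain_top T.1 T.2⟩
  invFun C := ⟨ofChain C.1 C.2, ofChain_lt_n C.1 C.2⟩
  left_inv T := Subtype.ext (ofChain_toChain T.1 T.2)
  right_inv C := Subtype.ext (toChain_ofChain C.1 C.2)

end SSYT

/-! ### Stars and bars -/

/-- Functions on a fintype correspond to multisets. -/
noncomputable def funMultisetEquiv (α : Type*) [Fintype α] [DecidableEq α] : (α → ℕ) ≃ Multiset α :=
  (Finsupp.equivFunOnFinite.symm).trans Multiset.toFinsupp.symm.toEquiv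

theorem card_funMultisetEquiv {α : Type*} [Fintype α] [DecidableEq α] (v : α → ℕ) :
    Multiset.card (funMultisetEquiv α v) = ∑ a, v a := by
  have h1 : Multiset.toFinsupp (funMultisetEquiv α v) = Finsupp.equivFunOnFinite.symm v :=
    Multiset.toFinsupp.apply_symm_apply _
  have h2 := Multiset.toFinsupp_sum_eq (funMultisetEquiv α v)
  rw [h1] at h2
  rw [← h2, Finsupp.sum_fintype]
  · simp
  · intro a; rfl

/-- Stars and bars: functions with given sum correspond to multisets of fixed size. -/
noncomputable def sumFunEquivSym (α : Type*) [Fintype α] [DecidableEq α] (k : ℕ) :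
    {v : α → ℕ // ∑ a, v a = k} ≃ Sym α k :=
  Equiv.subtypeEquiv (funMultisetEquiv α) (fun v => by rw [← card_funMultisetEquiv v, eq_comm])

theorem card_sumFun (α : Type*) [Fintype α] [DecidableEq α] (k : ℕ) :
    Nat.card {v : α → ℕ // ∑ a, v a = k} = (Fintype.card α + k - 1).choose k := by
  rw [Nat.card_congr (sumFunEquivSym α k), Nat.card_eq_fintype_card]
  exact Sym.card_sym_eq_choose k

/-! ### Matrices as lists of row data -/

/-- One row of a matrix as `RowData`. -/
def rowDataEquiv {n : ℕ} : (Fin n → ℕ) ≃ RowData n where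
  toFun v := ⟨fun i => if h : 1 ≤ i ∧ i ≤ n then v ⟨i - 1, by omega⟩ else 0,
    fun i hi => dif_neg (by omega)⟩
  invFun t := fun i => t.1 (i.1 + 1)
  left_inv v := by
    funext i
    show (if h : 1 ≤ i.1 + 1 ∧ i.1 + 1 ≤ n then v ⟨i.1 + 1 - 1, _⟩ else 0) = v i
    rw [dif_pos ⟨by omega, by omega⟩]
    exact congrArg v (Fin.ext (by simp))
  right_inv t := by
    apply Subtype.ext
    funext i
    show (if h : 1 ≤ i ∧ i ≤ n then t.1 (i - 1 + 1) else 0) = t.1 i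
    rcases Decidable.em (1 ≤ i ∧ i ≤ n) with hi | hi
    · rw [dif_pos hi, show i - 1 + 1 = i from by omega]
    · rw [dif_neg hi, t.2 i (by omega)]

theorem rowSum_rowDataEquiv {n : ℕ} (v : Fin n → ℕ) :
    rowSum (rowDataEquiv v) = ∑ i, v i := by
  unfold rowSum
  rw [Finset.sum_range_succ']
  have h0 : (rowDataEquiv v).1 0 = 0 := (rowDataEquiv v).2 0 (Or.inl rfl)
  rw [h0, add_zero]
  rw [← Fin.sum_univ_eq_sum_range (fun i => (rowDataEquiv v).1 (i + 1)) n]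
  apply Finset.sum_congr rfl
  intro i _
  show (if h : 1 ≤ i.1 + 1 ∧ i.1 + 1 ≤ n then v ⟨i.1 + 1 - 1, _⟩ else 0) = v i
  rw [dif_pos ⟨by omega, by omega⟩]
  exact congrArg v (Fin.ext (by simp))

/-- A matrix as a family of row data. -/
def matEquiv {n m : ℕ} : (Fin n × Fin m → ℕ) ≃ (Fin m → RowData n) where
  toFun M := fun j => rowDataEquiv (fun i => M (i, j))
  invFun R := fun p => rowDataEquiv.symm (R p.2) p.1
  left_inv M := by
    funext p
    show rowDataEquiv.symm (rowDataEquiv _) p.1 = M p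
    rw [Equiv.symm_apply_apply]
  right_inv R := by
    funext j
    show rowDataEquiv (fun i => rowDataEquiv.symm (R j) i) = R j
    have : (fun i => rowDataEquiv.symm (R j) i) = rowDataEquiv.symm (R j) := rfl
    rw [this, Equiv.apply_symm_apply]

theorem sum_matEquiv {n m : ℕ} (M : Fin n × Fin m → ℕ) :
    ∑ j, rowSum (matEquiv M j) = ∑ p, M p := by
  rw [Fintype.sum_prod_type_right]
  apply Finset.sum_congr rfl
  intro j _
  rw [show matEquiv M j = rowDataEquiv (fun i => M (i, j)) from rfl, rowSum_rowDataEquiv]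

/-! ### Partitions as row-length functions -/

/-- The descending list of parts of a partition. -/
def plist {k : ℕ} (p : Nat.Partition k) : List ℕ := (p.parts.sort (· ≤ ·)).reverse

/-- The row-length function of a partition. -/
def pfun {k : ℕ} (p : Nat.Partition k) : ℕ → ℕ := fun r => (plist p).getD r 0

section PartitionFun

variable {k : ℕ} (p : Nat.Partition k)

theorem plist_length : (plist p).length = p.parts.card := by
  rw [plist, List.length_reverse, Multiset.length_sort]

theorem plist_sorted : (plist p).Pairwise (· ≥ ·) :=
  List.pairwise_reverse.mpr (p.parts.pairwise_sort (· ≤ ·))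

theorem plist_pos : ∀ x ∈ plist p, 0 < x := by
  intro x hx
  rw [plist, List.mem_reverse, Multiset.mem_sort] at hx
  exact p.parts_pos hx

theorem plist_sum : (plist p).sum = k := by
  rw [plist, List.sum_reverse]
  have : ((p.parts.sort (· ≤ ·) : List ℕ) : Multiset ℕ).sum = (p.parts.sort (· ≤ ·)).sum :=
    Multiset.sum_coe _
  rw [← this, Multiset.sort_eq, p.parts_sum]

theorem rowLen_toYoungDiagram (r : ℕ) : (_root_.toYoungDiagram p).rowLen r = pfun p r := by
  apply nat_eq_of_lt_iff
  intro j
  rw [← YoungDiagram.mem_iff_lt_rowLen]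
  rw [show _root_.toYoungDiagram p = YoungDiagram.ofRowLens (plist p)
    (by exact List.sortedGE_iff_pairwise.mpr (List.pairwise_reverse.mpr (p.parts.pairwise_sort (· ≤ ·)))) from rfl]
  rw [YoungDiagram.mem_ofRowLens]
  unfold pfun
  rcases lt_or_ge r (plist p).length with hr | hr
  · rw [List.getD_eq_getElem _ 0 hr]
    constructor
    · rintro ⟨_, h⟩; exact h
    · intro h; exact ⟨hr, h⟩
  · rw [List.getD_eq_default _ 0 hr]
    constructor
    · rintro ⟨h, _⟩; omega
    · intro h; omega

theorem pfun_anti : Anti (pfun p) := by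
  intro r
  unfold pfun
  rcases lt_or_ge (r+1) (plist p).length with hr | hr
  · rw [List.getD_eq_getElem _ 0 hr, List.getD_eq_getElem _ 0 (by omega)]
    exact List.pairwise_iff_getElem.mp (plist_sorted p) r (r+1) (by omega) hr (by omega)
  · rw [List.getD_eq_default _ 0 hr]
    exact Nat.zero_le _

theorem pfun_zero_iff (N : ℕ) : pfun p N = 0 ↔ p.parts.card ≤ N := by
  rw [← plist_length]
  unfold pfun
  constructor
  · intro h
    by_contra hlt
    push_neg at hlt
    rw [List.getD_eq_getElem _ 0 hlt] at h
    have := plist_pos p _ (List.getElem_mem hlt)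
    omega
  · intro h
    rw [List.getD_eq_default _ 0 h]

theorem list_sum_getD (l : List ℕ) : ∑ i ∈ Finset.range l.length, l.getD i 0 = l.sum := by
  induction l with
  | nil => simp
  | cons x l ih =>
    rw [List.length_cons, Finset.sum_range_succ']
    simp only [List.getD_cons_succ, List.getD_cons_zero, List.sum_cons]
    rw [ih]
    omega

theorem psum_pfun {N : ℕ} (hN : p.parts.card ≤ N) : psum (pfun p) N = k := by
  have h1 : psum (pfun p) N = psum (pfun p) (plist p).length := by
    apply psum_congr_of_zero
    · intro r hr
      unfold pfun
      exact List.getD_eq_default _ 0 hr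
    · have := plist_length p
      omega
  rw [h1]
  show ∑ i ∈ Finset.range (plist p).length, (plist p).getD i 0 = k
  rw [list_sum_getD, plist_sum]

end PartitionFun

/-! ### Partitions from row-length functions -/

/-- The list of nonzero values of a partition function. -/
def pList (g : ℕ → ℕ) (N : ℕ) : List ℕ := ((List.range N).map g).filter (fun x => x ≠ 0)

theorem list_sum_range_map (g : ℕ → ℕ) (N : ℕ) :
    ((List.range N).map g).sum = psum g N := by
  induction N with
  | zero => simp [psum]
  | succ N ih =>
    rw [List.range_succ, List.map_append, List.sum_append, ih]
    simp [psum, Finset.sum_range_succ]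

theorem list_sum_filter_ne_zero (l : List ℕ) : (l.filter (fun x => x ≠ 0)).sum = l.sum := by
  induction l with
  | nil => rfl
  | cons x l ih =>
    by_cases hx : x = 0
    · subst hx; simpa using ih
    · rw [List.filter_cons_of_pos (by simpa using hx), List.sum_cons, List.sum_cons, ih]

/-- Build a partition of `k` from an eventually-zero antitone function summing to `k`. -/
def ptnOf {k : ℕ} (g : ℕ → ℕ) (N : ℕ) (hsum : psum g N = k) : Nat.Partition k where
  parts := ↑(pList g N)
  parts_pos := by
    intro x hx
    have : x ∈ pList g N := hx
    rw [pList, List.mem_filter] at this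
    have := this.2
    simp at this
    omega
  parts_sum := by
    show (↑(pList g N) : Multiset ℕ).sum = k
    rw [Multiset.sum_coe, pList, list_sum_filter_ne_zero, list_sum_range_map, hsum]

theorem pList_eq (g : ℕ → ℕ) (N : ℕ) (hanti : Anti g) (hzero : g N = 0) :
    pList g N = (List.range (Nat.find (⟨N, hzero⟩ : ∃ i, g i = 0))).map g := by
  set M := Nat.find (⟨N, hzero⟩ : ∃ i, g i = 0) with hM
  have hMN : M ≤ N := Nat.find_min' _ hzero
  have hgM : g M = 0 := Nat.find_spec (⟨N, hzero⟩ : ∃ i, g i = 0)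
  rw [pList, show N = M + (N - M) from by omega, List.range_add, List.map_append,
    List.filter_append]
  have h1 : ((List.range M).map g).filter (fun x => x ≠ 0) = (List.range M).map g := by
    apply List.filter_eq_self.mpr
    intro x hx
    rw [List.mem_map] at hx
    obtain ⟨i, hi, rfl⟩ := hx
    rw [List.mem_range] at hi
    have := Nat.find_min (⟨N, hzero⟩ : ∃ i, g i = 0) (show i < M from hi)
    simpa using this
  have h2 : (((List.range (N - M)).map (M + ·)).map g).filter (fun x => x ≠ 0) = [] := by
    apply List.filter_eq_nil_iff.mpr
    intro x hx
    rw [List.map_map, List.mem_map] at hx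
    obtain ⟨i, _, rfl⟩ := hx
    have : g (M + i) = 0 := hanti.eventually_zero hgM (by omega)
    simpa using this
  rw [h1, h2, List.append_nil]

theorem pList_sorted (g : ℕ → ℕ) (N : ℕ) (hanti : Anti g) (hzero : g N = 0) :
    (pList g N).Pairwise (· ≥ ·) := by
  rw [pList_eq g N hanti hzero]
  exact List.pairwise_map.mpr
    (List.Pairwise.imp (fun {a b} (hab : a < b) => hanti.le_of_le (by omega : a ≤ b))
      (List.pairwise_lt_range (n := _)))

/-- The key roundtrip: the row-length function of `ptnOf g` is `g` itself. -/
theorem pfun_ptnOf {k : ℕ} (g : ℕ → ℕ) (N : ℕ) (hanti : Anti g) (hzero : g N = 0)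
    (hsum : psum g N = k) : pfun (ptnOf g N hsum) = g := by
  set M := Nat.find (⟨N, hzero⟩ : ∃ i, g i = 0) with hM
  have hgM : g M = 0 := Nat.find_spec (⟨N, hzero⟩ : ∃ i, g i = 0)
  have hplist : plist (ptnOf g N hsum) = pList g N := by
    rw [plist]
    have hperm : ((ptnOf g N hsum).parts.sort (· ≤ ·)).Perm (pList g N).reverse := by
      rw [← Multiset.coe_eq_coe, Multiset.sort_eq, Multiset.coe_reverse]
      rfl
    have hs1 : ((ptnOf g N hsum).parts.sort (· ≤ ·)).Pairwise (· ≤ ·) :=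
      Multiset.pairwise_sort _ _
    have hs2 : (pList g N).reverse.Pairwise (· ≤ ·) :=
      List.pairwise_reverse.mpr (pList_sorted g N hanti hzero)
    rw [List.Perm.eq_of_pairwise' hs1 hs2 hperm, List.reverse_reverse]
  funext r
  rw [pfun, hplist, pList_eq g N hanti hzero, ← hM]
  rcases lt_or_ge r M with hr | hr
  · rw [List.getD_eq_getElem _ 0 (by simpa using hr)]
    simp
  · rw [List.getD_eq_default _ 0 (by simpa using hr)]
    exact (hanti.eventually_zero hgM hr).symm

/-- Roundtrip: rebuilding a partition from its row-length function. -/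
theorem ptnOf_pfun {k : ℕ} (p : Nat.Partition k) {N : ℕ} (hN : p.parts.card ≤ N) :
    ptnOf (pfun p) N (psum_pfun p hN) = p := by
  apply Nat.Partition.ext
  show (↑(pList (pfun p) N) : Multiset ℕ) = p.parts
  have hzero : pfun p N = 0 := (pfun_zero_iff p N).mpr hN
  have hM : Nat.find (⟨N, hzero⟩ : ∃ i, pfun p i = 0) = p.parts.card := by
    apply le_antisymm
    · exact Nat.find_min' _ ((pfun_zero_iff p _).mpr le_rfl)
    · by_contra hlt
      push_neg at hlt
      have hfind := Nat.find_spec (⟨N, hzero⟩ : ∃ i, pfun p i = 0)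
      have := (pfun_zero_iff p _).mp hfind
      omega
  have h1 : pList (pfun p) N = (List.range p.parts.card).map (pfun p) := by
    rw [pList_eq (pfun p) N (pfun_anti p) hzero, hM]
  have h2 : (List.range p.parts.card).map (pfun p) = plist p := by
    apply List.ext_getElem
    · simp [plist_length]
    · intro i h1' h2'
      simp only [List.getElem_map, List.getElem_range]
      rw [pfun, List.getD_eq_getElem _ 0 h2']
  rw [h1, h2, plist, Multiset.coe_reverse, Multiset.sort_eq]

/-! ### Final assembly -/

section Assembly

variable {n m k : ℕ}

theorem ptnOf_congr {k : ℕ} {g g' : ℕ → ℕ} (N : ℕ) (e : g = g') (h : psum g N = k) :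
    ptnOf g N h = ptnOf g' N (e ▸ h) := by subst e; rfl

/-- The pairs-of-chains space with total size `k`. -/
def S2 (n m k : ℕ) : Type := {x : PairType n m // psum (x.1.1.c n) n = k}

/-- The partition of `k` attached to a point of `S2`. -/
noncomputable def phi (x : S2 n m k) : Nat.Partition k := ptnOf (x.1.1.1.c n) n x.2

theorem phi_eq_iff (x : S2 n m k) (p : Nat.Partition k) :
    phi x = p ↔ x.1.1.1.c n = pfun p := by
  have hanti : Anti (x.1.1.1.c n) := x.1.1.1.anti n
  have hzero : x.1.1.1.c n n = 0 := x.1.1.1.rows_le n n le_rfl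
  constructor
  · intro e
    rw [← e]
    exact (pfun_ptnOf (x.1.1.1.c n) n hanti hzero x.2).symm
  · intro h
    have hcard : p.parts.card ≤ n := by
      apply (pfun_zero_iff p n).mp
      rw [← h]
      exact hzero
    rw [phi, ptnOf_congr n h x.2]
    exact ptnOf_pfun p hcard

/-- For partitions of legal width, the fiber of `phi` splits as a product. -/
noncomputable def fiberEquiv (p : Nat.Partition k) (hp : p.parts.card ≤ min n m) :
    {x : S2 n m k // phi x = p}
      ≃ ({C : Chain n // C.c n = pfun p} × {Q : Chain m // Q.c m = pfun p}) where
  toFun x :=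
    have hC : x.1.1.1.1.c n = pfun p := (phi_eq_iff x.1 p).mp x.2
    (⟨x.1.1.1.1, hC⟩, ⟨x.1.1.1.2, x.1.1.2.trans hC⟩)
  invFun y :=
    ⟨⟨⟨(y.1.1, y.2.1), y.2.2.trans y.1.2.symm⟩,
      by rw [y.1.2]; exact psum_pfun p (le_trans hp (min_le_left n m))⟩,
      (phi_eq_iff _ p).mpr y.1.2⟩
  left_inv x := by
    apply Subtype.ext
    apply Subtype.ext
    apply Subtype.ext
    rfl
  right_inv y := by
    apply Prod.ext
    · exact Subtype.ext rfl
    · exact Subtype.ext rfl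

theorem fiber_empty (p : Nat.Partition k) (hp : ¬ p.parts.card ≤ min n m) :
    IsEmpty {x : S2 n m k // phi x = p} := by
  constructor
  rintro ⟨x, hx⟩
  rw [phi_eq_iff x p] at hx
  apply hp
  have h1 : p.parts.card ≤ n := by
    apply (pfun_zero_iff p n).mp
    rw [← hx]
    exact x.1.1.1.rows_le n n le_rfl
  have h2 : p.parts.card ≤ m := by
    apply (pfun_zero_iff p m).mp
    have : x.1.1.2.c m m = 0 := x.1.1.2.rows_le m m le_rfl
    rw [← hx, ← x.1.2]
    exact this
  omega

/-- Chains of length `n` with a given top count bounded SSYT. -/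
theorem card_chains (p : Nat.Partition k) (n : ℕ) :
    Nat.card {C : Chain n // C.c n = pfun p}
      = ssytCount (_root_.toYoungDiagram p) n := by
  rw [ssytCount]
  apply Nat.card_congr
  refine (Equiv.subtypeEquiv (Equiv.refl _) ?_).trans (ssytChainEquiv (_root_.toYoungDiagram p) n).symm
  intro C
  have : (_root_.toYoungDiagram p).rowLen = pfun p := funext (rowLen_toYoungDiagram p)
  rw [this]
  rfl

theorem main_count (n m k : ℕ) :
    (n * m + k - 1).choose k
      = ∑ p ∈ Finset.univ.filter (fun p : Nat.Partition k => p.parts.card ≤ min n m),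
          ssytCount (_root_.toYoungDiagram p) n * ssytCount (_root_.toYoungDiagram p) m := by
  classical
  -- matrices with sum k
  have step1 : Nat.card {v : Fin n × Fin m → ℕ // ∑ a, v a = k} = (n * m + k - 1).choose k := by
    rw [card_sumFun]
    congr 2
    simp
  -- the big equivalence
  have bigE : {v : Fin n × Fin m → ℕ // ∑ a, v a = k} ≃ S2 n m k := by
    refine Equiv.subtypeEquiv (matEquiv.trans (gridEquiv n m)) ?_
    intro v
    show (∑ a, v a = k) ↔ psum (((gridEquiv n m) (matEquiv v)).1.1.c n) n = k
    rw [psum_gridEquiv, sum_matEquiv]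
  have hfin0 : Finite {v : Fin n × Fin m → ℕ // ∑ a, v a = k} :=
    Finite.of_equiv _ (sumFunEquivSym (Fin n × Fin m) k).symm
  have hfinS2 : Finite (S2 n m k) := Finite.of_equiv _ bigE
  have hfinFiber : ∀ p : Nat.Partition k, Finite {x : S2 n m k // phi x = p} := by
    intro p
    exact Subtype.finite
  letI : ∀ p : Nat.Partition k, Fintype {x : S2 n m k // phi x = p} :=
    fun p => Fintype.ofFinite _
  have step2 : Nat.card (S2 n m k)
      = ∑ p : Nat.Partition k, Nat.card {x : S2 n m k // phi x = p} := by
    rw [Nat.card_congr (Equiv.sigmaFiberEquiv phi).symm, Nat.card_eq_fintype_card,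
      Fintype.card_sigma]
    exact Finset.sum_congr rfl fun p _ => (Nat.card_eq_fintype_card).symm
  have step3 : ∀ p : Nat.Partition k, p.parts.card ≤ min n m →
      Nat.card {x : S2 n m k // phi x = p}
        = ssytCount (_root_.toYoungDiagram p) n * ssytCount (_root_.toYoungDiagram p) m := by
    intro p hp
    rw [Nat.card_congr (fiberEquiv p hp), Nat.card_prod, card_chains, card_chains]
  have step4 : ∀ p : Nat.Partition k, ¬ p.parts.card ≤ min n m →
      Nat.card {x : S2 n m k // phi x = p} = 0 := by
    intro p hp
    haveI := fiber_empty (n := n) (m := m) p hp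
    exact Nat.card_of_isEmpty
  calc (n * m + k - 1).choose k
      = Nat.card {v : Fin n × Fin m → ℕ // ∑ a, v a = k} := step1.symm
    _ = Nat.card (S2 n m k) := Nat.card_congr bigE
    _ = ∑ p : Nat.Partition k, Nat.card {x : S2 n m k // phi x = p} := step2
    _ = ∑ p ∈ Finset.univ.filter (fun p : Nat.Partition k => p.parts.card ≤ min n m),
          Nat.card {x : S2 n m k // phi x = p} := by
        rw [Finset.sum_filter]
        apply Finset.sum_congr rfl
        intro p _
        by_cases hp : p.parts.card ≤ min n m
        · rw [if_pos hp]
        · rw [if_neg hp, step4 p hp]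
    _ = _ := by
        apply Finset.sum_congr rfl
        intro p hp
        rw [Finset.mem_filter] at hp
        exact step3 p hp.2

end Assembly
end CauchyRSK


/-- Cauchy identity in dimensions, expressing `(GL_n, GL_m)` duality
`S^k(ℂⁿ⊗ℂᵐ) = ⊕_λ V(λ) ⊗ V(λ)`: for `n, m ≥ 1`,
`C(nm + k − 1, k) = ∑_λ s_λ(1,…,1 [n ones]) · s_λ(1,…,1 [m ones])`, the sum over
partitions `λ` of `k` with at most `min(n,m)` rows. -/
theorem cauchy_dimensions (n m k : ℕ) (hn : 1 ≤ n) (hm : 1 ≤ m) :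
    Nat.choose (n * m + k - 1) k =
      ∑ p ∈ Finset.univ.filter
          (fun p : Nat.Partition k => p.parts.card ≤ min n m),
        ssytCount (toYoungDiagram p) n * ssytCount (toYoungDiagram p) m :=
  CauchyRSK.main_count n m k
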